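/- For f ∈ L¹(ℝ²), ∬_{ℝ²} f(x,y) φ₂(x,y) dx dy = ∬_{Q²} e^{πi(x₂ y₁ − y₂ x₁)} f(x₁+x₂, y₁+y₂) dx₁ dy₁ dx₂ dy₂, where Q = [0,1]×[0,1]. -/

import Mathlib

open MeasureTheory

noncomputable def tConv (F G : ℝ × ℝ → ℂ) : ℝ × ℝ → ℂ :=
  fun p => ∫ q : ℝ × ℝ, F (p.1 - q.1, p.2 - q.2) * G q *
    Complex.exp (Real.pi * Complex.I * ((q.1 : ℂ) * p.2 - (q.2 : ℂ) * p.1))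

noncomputable def phi1 : ℝ × ℝ → ℂ :=
  fun p => if p.1 ∈ Set.Ico (0:ℝ) 1 ∧ p.2 ∈ Set.Ico (0:ℝ) 1 then 1 else 0

noncomputable def phiN : ℕ → (ℝ × ℝ → ℂ)
  | 0 => 0
  | 1 => phi1
  | (n+2) => tConv (phiN (n+1)) phi1

lemma norm_exp_pi (a b c d : ℝ) :
    ‖Complex.exp ((Real.pi:ℂ) * Complex.I * ((a:ℂ) * b - (c:ℂ) * d))‖ = 1 := by
  rw [Complex.norm_exp]
  have : ((Real.pi:ℂ) * Complex.I * ((a:ℂ) * b - (c:ℂ) * d)).re = 0 := by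
    simp [Complex.mul_re, Complex.mul_im]
  rw [this, Real.exp_zero]

lemma phi1_eq_indicator : phi1 =
    Set.indicator (Set.Ico (0:ℝ) 1 ×ˢ Set.Ico (0:ℝ) 1) (fun _ => (1:ℂ)) := by
  funext p
  by_cases h : p.1 ∈ Set.Ico (0:ℝ) 1 ∧ p.2 ∈ Set.Ico (0:ℝ) 1 <;>
    simp [phi1, Set.indicator_apply, Set.mem_prod, h]

lemma measurable_phi1 : Measurable phi1 := by
  rw [phi1_eq_indicator]
  exact measurable_const.indicator (measurableSet_Ico.prod measurableSet_Ico)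

lemma integrable_phi1 : Integrable phi1 := by
  rw [phi1_eq_indicator, integrable_indicator_iff (measurableSet_Ico.prod measurableSet_Ico)]
  refine integrableOn_const ?_ (by simp)
  rw [Measure.volume_eq_prod, Measure.prod_prod, Real.volume_Ico]
  norm_num

lemma phi1_norm_le (p : ℝ × ℝ) : ‖phi1 p‖ ≤ 1 := by
  unfold phi1; split_ifs <;> simp

noncomputable def Hfun (f : ℝ × ℝ → ℂ) : (ℝ × ℝ) × (ℝ × ℝ) → ℂ :=
  fun z => f z.1 * (phi1 (z.1.1 - z.2.1, z.1.2 - z.2.2) * phi1 z.2 *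
    Complex.exp (Real.pi * Complex.I * ((z.2.1 : ℂ) * z.1.2 - (z.2.2 : ℂ) * z.1.1)))

noncomputable def Wfun (f : ℝ × ℝ → ℂ) : (ℝ × ℝ) × (ℝ × ℝ) → ℂ :=
  fun z => f (z.1 + z.2) * (phi1 z.1 * phi1 z.2 *
    Complex.exp (Real.pi * Complex.I * ((z.2.1 : ℂ) * z.1.2 - (z.2.2 : ℂ) * z.1.1)))

noncomputable def Tequiv : ((ℝ×ℝ)×(ℝ×ℝ)) ≃ᵐ ((ℝ×ℝ)×(ℝ×ℝ)) :=
{ toFun := fun z => (z.1 + z.2, z.2),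
  invFun := fun z => (z.1 - z.2, z.2),
  left_inv := fun z => by simp,
  right_inv := fun z => by simp,
  measurable_toFun := (measurable_fst.add measurable_snd).prodMk measurable_snd,
  measurable_invFun := (measurable_fst.sub measurable_snd).prodMk measurable_snd }

lemma W_eq_H_comp (f : ℝ × ℝ → ℂ) :
    (Hfun f) ∘ (fun z : (ℝ×ℝ)×(ℝ×ℝ) => (z.1 + z.2, z.2)) = Wfun f := by
  funext z
  simp only [Function.comp_apply, Hfun, Wfun, Prod.fst_add, Prod.snd_add]
  rw [show z.1.1 + z.2.1 - z.2.1 = z.1.1 from by ring,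
      show z.1.2 + z.2.2 - z.2.2 = z.1.2 from by ring]
  congr 2
  exact congrArg Complex.exp (by push_cast; ring)

lemma hH_int (f : ℝ × ℝ → ℂ) (hf : Integrable f) :
    Integrable (Hfun f) ((volume : Measure (ℝ×ℝ)).prod volume) := by
  have hm : AEStronglyMeasurable (Hfun f) ((volume : Measure (ℝ×ℝ)).prod volume) := by
    apply AEStronglyMeasurable.mul
    · exact hf.1.comp_quasiMeasurePreserving Measure.quasiMeasurePreserving_fst
    · apply Measurable.aestronglyMeasurable
      refine ((measurable_phi1.comp ?_).mul (measurable_phi1.comp measurable_snd)).mul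
        (Complex.measurable_exp.comp ?_)
      · fun_prop
      · fun_prop
  refine Integrable.mono' ((hf.norm).mul_prod integrable_phi1.norm) hm
    (Filter.Eventually.of_forall fun z => ?_)
  have h1 : ‖Hfun f z‖ = ‖f z.1‖ * (‖phi1 (z.1.1 - z.2.1, z.1.2 - z.2.2)‖ * ‖phi1 z.2‖ * 1) := by
    simp only [Hfun, norm_mul]
    rw [norm_exp_pi]
  rw [h1]
  refine mul_le_mul_of_nonneg_left ?_ (norm_nonneg _)
  rw [mul_one]
  calc ‖phi1 (z.1.1 - z.2.1, z.1.2 - z.2.2)‖ * ‖phi1 z.2‖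
      ≤ 1 * ‖phi1 z.2‖ := mul_le_mul_of_nonneg_right (phi1_norm_le _) (norm_nonneg _)
    _ = ‖phi1 z.2‖ := one_mul _

lemma ite_integral (P : Prop) [Decidable P] (g : ℝ → ℂ) :
    (∫ x : ℝ, (if P then g x else 0)) = if P then ∫ x : ℝ, g x else 0 := by
  split_ifs <;> simp

lemma icc_hop (h : ℝ → ℂ) :
    (∫ x in Set.Icc (0:ℝ) 1, h x) = ∫ x : ℝ, if x ∈ Set.Ico (0:ℝ) 1 then h x else 0 := by
  rw [integral_Icc_eq_integral_Ico, ← integral_indicator measurableSet_Ico]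
  refine integral_congr_ae (Filter.Eventually.of_forall fun x => ?_)
  by_cases hx : x ∈ Set.Ico (0:ℝ) 1 <;> simp [Set.indicator_apply, hx]

lemma W_split (f : ℝ × ℝ → ℂ) (x₁ y₁ x₂ y₂ : ℝ) :
    Wfun f ((x₁, y₁), (x₂, y₂)) =
      if x₁ ∈ Set.Ico (0:ℝ) 1 then
        if y₁ ∈ Set.Ico (0:ℝ) 1 then
          if x₂ ∈ Set.Ico (0:ℝ) 1 then
            if y₂ ∈ Set.Ico (0:ℝ) 1 then
              Complex.exp (Real.pi * Complex.I * ((x₂ : ℂ) * y₁ - (y₂ : ℂ) * x₁)) *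
                f (x₁ + x₂, y₁ + y₂)
            else 0
          else 0
        else 0
      else 0 := by
  by_cases h1 : x₁ ∈ Set.Ico (0:ℝ) 1 <;> by_cases h2 : y₁ ∈ Set.Ico (0:ℝ) 1 <;>
    by_cases h3 : x₂ ∈ Set.Ico (0:ℝ) 1 <;> by_cases h4 : y₂ ∈ Set.Ico (0:ℝ) 1 <;>
    simp [Wfun, phi1, Prod.mk_add_mk, h1, h2, h3, h4, mul_comm]

theorem integral_against_phi2 (f : ℝ × ℝ → ℂ) (hf : Integrable f) :
    (∫ p : ℝ × ℝ, f p * phiN 2 p) =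
      ∫ x₁ in Set.Icc (0:ℝ) 1, ∫ y₁ in Set.Icc (0:ℝ) 1,
        ∫ x₂ in Set.Icc (0:ℝ) 1, ∫ y₂ in Set.Icc (0:ℝ) 1,
          Complex.exp (Real.pi * Complex.I * ((x₂ : ℂ) * y₁ - (y₂ : ℂ) * x₁)) *
            f (x₁ + x₂, y₁ + y₂) := by
  have hH := hH_int f hf
  have hT : MeasurePreserving (fun z : (ℝ×ℝ)×(ℝ×ℝ) => (z.1 + z.2, z.2))
      ((volume : Measure (ℝ×ℝ)).prod volume) ((volume : Measure (ℝ×ℝ)).prod volume) :=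
    measurePreserving_add_prod volume volume
  have hW : Integrable (Wfun f) ((volume : Measure (ℝ×ℝ)).prod volume) := by
    rw [← W_eq_H_comp]
    exact (hT.integrable_comp hH.1).2 hH
  -- step 1: LHS = double integral of Hfun
  have step1 : (∫ p : ℝ × ℝ, f p * phiN 2 p)
      = ∫ p : ℝ × ℝ, ∫ q : ℝ × ℝ, Hfun f (p, q) := by
    refine congrArg (integral volume) (funext fun p => ?_)
    show f p * tConv phi1 phi1 p = _
    rw [tConv, ← integral_const_mul]
    rfl
  -- step 2: = product integral, = integral of Wfun
  have step2 : (∫ p : ℝ × ℝ, ∫ q : ℝ × ℝ, Hfun f (p, q))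
      = ∫ z, Wfun f z ∂((volume : Measure (ℝ×ℝ)).prod volume) := by
    rw [← integral_prod _ hH, ← hT.integral_comp Tequiv.measurableEmbedding (Hfun f)]
    exact congrArg (integral _) (W_eq_H_comp f)
  -- step 3: split into iterated integrals
  have hg : Integrable (fun r : ℝ × ℝ => ∫ q : ℝ × ℝ, Wfun f (r, q)) := hW.integral_prod_left
  have step3 : (∫ z, Wfun f z ∂((volume : Measure (ℝ×ℝ)).prod volume))
      = ∫ r : ℝ × ℝ, ∫ q : ℝ × ℝ, Wfun f (r, q) := integral_prod _ hW
  rw [step1, step2, step3]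
  -- outer split
  have houter : (∫ r : ℝ × ℝ, ∫ q : ℝ × ℝ, Wfun f (r, q))
      = ∫ x₁ : ℝ, ∫ y₁ : ℝ, ∫ q : ℝ × ℝ, Wfun f ((x₁, y₁), q) := by
    rw [Measure.volume_eq_prod] at hg ⊢
    exact integral_prod _ hg
  rw [houter]
  -- inner split, a.e.
  have hae : ∀ᵐ r : ℝ × ℝ, Integrable (fun q : ℝ × ℝ => Wfun f (r, q)) := hW.prod_right_ae
  have hae2 : ∀ᵐ r : ℝ × ℝ, (∫ q : ℝ × ℝ, Wfun f (r, q))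
      = ∫ x₂ : ℝ, ∫ y₂ : ℝ, Wfun f (r, (x₂, y₂)) := by
    filter_upwards [hae] with r hr
    rw [Measure.volume_eq_prod] at hr
    exact integral_prod _ hr
  rw [Measure.volume_eq_prod] at hae2
  have hae3 := Measure.ae_ae_of_ae_prod hae2
  have hinner : (∫ x₁ : ℝ, ∫ y₁ : ℝ, ∫ q : ℝ × ℝ, Wfun f ((x₁, y₁), q))
      = ∫ x₁ : ℝ, ∫ y₁ : ℝ, ∫ x₂ : ℝ, ∫ y₂ : ℝ, Wfun f ((x₁, y₁), (x₂, y₂)) := by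
    refine integral_congr_ae ?_
    filter_upwards [hae3] with x₁ hx₁
    exact integral_congr_ae hx₁
  rw [hinner]
  -- final: compare with RHS
  simp only [W_split, icc_hop, ite_integral]
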